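/- The Marcum Q-function Q₁(a, b) = ∫_b^∞ x exp(−(x²+a²)/2) I₀(ax) dx is strictly increasing in a ≥ 0 for each fixed b > 0. -/

import Mathlib

open MeasureTheory Real Set Finset

/-- The modified Bessel function of the first kind of order zero. -/
noncomputable def besselI0 (x : ℝ) : ℝ :=
  ∑' k : ℕ, (x / 2) ^ (2 * k) / ((Nat.factorial k : ℝ))^2

/-- The Marcum Q-function of order 1. -/
noncomputable def marcumQ (a b : ℝ) : ℝ :=
  ∫ x in Set.Ioi b, x * Real.exp (-(x^2 + a^2) / 2) * besselI0 (a * x)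

private lemma real_exp_eq_tsum (x : ℝ) : Real.exp x = ∑' n : ℕ, x ^ n / (n.factorial : ℝ) := by
  rw [Real.exp_eq_exp_ℝ, NormedSpace.exp_eq_tsum_div]

/-- Partial sums of the exponential series. -/
noncomputable def Spart (l : ℝ) (k : ℕ) : ℝ := ∑ j ∈ Finset.range (k + 1), l ^ j / (j.factorial : ℝ)

lemma Spart_nonneg {l : ℝ} (hl : 0 ≤ l) (k : ℕ) : 0 ≤ Spart l k :=
  Finset.sum_nonneg fun j _ => div_nonneg (pow_nonneg hl j) (Nat.cast_nonneg _)

lemma Spart_le_exp {l : ℝ} (hl : 0 ≤ l) (k : ℕ) : Spart l k ≤ Real.exp l :=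
  Real.sum_le_exp_of_nonneg hl (k + 1)

lemma Spart_mono {l : ℝ} (hl : 0 ≤ l) : Monotone (Spart l) := by
  intro i j hij
  exact Finset.sum_le_sum_of_subset_of_nonneg
    (Finset.range_subset_range.2 (by omega))
    (fun m _ _ => div_nonneg (pow_nonneg hl m) (Nat.cast_nonneg _))

lemma Spart_zero_lt_one {l : ℝ} (hl : 0 < l) : Spart l 0 < Spart l 1 := by
  simp [Spart, Finset.sum_range_succ]
  positivity

/-- Poisson weight. -/
noncomputable def pois (u : ℝ) (k : ℕ) : ℝ := Real.exp (-u) * u ^ k / (k.factorial : ℝ)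

lemma pois_nonneg {u : ℝ} (hu : 0 ≤ u) (k : ℕ) : 0 ≤ pois u k := by
  unfold pois; positivity

lemma summable_pois (u : ℝ) : Summable (pois u) := by
  have := (Real.summable_pow_div_factorial u).mul_left (Real.exp (-u))
  apply this.congr
  intro k
  simp [pois, mul_div_assoc]

lemma tsum_pois (u : ℝ) : ∑' k, pois u k = 1 := by
  simp only [pois, mul_div_assoc]
  rw [tsum_mul_left, ← real_exp_eq_tsum, ← Real.exp_add]
  simp

lemma pois_conv (u w : ℝ) (k : ℕ) :
    pois (u + w) k = ∑ ij ∈ Finset.HasAntidiagonal.antidiagonal k, pois u ij.1 * pois w ij.2 := by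
  rw [Finset.Nat.sum_antidiagonal_eq_sum_range_succ_mk]
  have hbin : (u + w) ^ k = ∑ i ∈ Finset.range (k + 1), u ^ i * w ^ (k - i) * (k.choose i : ℝ) :=
    add_pow u w k
  unfold pois
  rw [hbin, Finset.mul_sum, Finset.sum_div]
  refine Finset.sum_congr rfl fun i hi => ?_
  have hik : i ≤ k := Nat.lt_succ_iff.mp (Finset.mem_range.mp hi)
  have hfact : (k.choose i : ℝ) * (i.factorial : ℝ) * ((k - i).factorial : ℝ) = (k.factorial : ℝ) := by
    exact_mod_cast congrArg (Nat.cast (R := ℝ)) (Nat.choose_mul_factorial_mul_factorial hik)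
  have h1 : (i.factorial : ℝ) ≠ 0 := Nat.cast_ne_zero.2 (Nat.factorial_ne_zero i)
  have h2 : ((k - i).factorial : ℝ) ≠ 0 := Nat.cast_ne_zero.2 (Nat.factorial_ne_zero (k - i))
  have h3 : (k.factorial : ℝ) ≠ 0 := Nat.cast_ne_zero.2 (Nat.factorial_ne_zero k)
  have hexp : Real.exp (-(u + w)) = Real.exp (-u) * Real.exp (-w) := by
    rw [← Real.exp_add]; ring_nf
  field_simp [hexp]
  ring_nf
  rw [show (-u - w : ℝ) = -w + -u by ring, Real.exp_add]
  linear_combination (w ^ (k - i) * u ^ i * Real.exp (-w) * Real.exp (-u)) * hfact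

lemma key_mono {l : ℝ} (hl : 0 < l) {u v : ℝ} (hu : 0 ≤ u) (huv : u < v) :
    ∑' k, pois u k * (Real.exp (-l) * Spart l k)
      < ∑' k, pois v k * (Real.exp (-l) * Spart l k) := by
  set w := v - u with hw
  have hw0 : 0 < w := by simp [hw]; linarith
  have hv : v = u + w := by ring
  set d : ℕ → ℝ := fun k => Real.exp (-l) * Spart l k with hd
  have hd_nonneg : ∀ k, 0 ≤ d k := fun k =>
    mul_nonneg (Real.exp_pos _).le (Spart_nonneg hl.le k)
  have hd_le_one : ∀ k, d k ≤ 1 := by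
    intro k
    have := mul_le_mul_of_nonneg_left (Spart_le_exp hl.le k) (Real.exp_pos (-l)).le
    simpa [← Real.exp_add] using this
  have hd_mono : Monotone d := fun i j hij =>
    mul_le_mul_of_nonneg_left (Spart_mono hl.le hij) (Real.exp_pos _).le
  have hd01 : d 0 < d 1 :=
    (mul_lt_mul_iff_right₀ (Real.exp_pos (-l))).2 (Spart_zero_lt_one hl)
  set A : ℕ → ℝ := fun k => ∑ ij ∈ Finset.HasAntidiagonal.antidiagonal k, pois u ij.1 * d ij.1 * pois w ij.2
    with hA
  set B : ℕ → ℝ := fun k => pois v k * d k with hB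
  have hf_sum : Summable (fun k => pois u k * d k) := by
    apply Summable.of_nonneg_of_le
      (fun k => mul_nonneg (pois_nonneg hu k) (hd_nonneg k))
      (fun k => ?_) (summable_pois u)
    calc pois u k * d k ≤ pois u k * 1 :=
          mul_le_mul_of_nonneg_left (hd_le_one k) (pois_nonneg hu k)
      _ = pois u k := mul_one _
  have hB_sum : Summable B := by
    apply Summable.of_nonneg_of_le
      (fun k => mul_nonneg (pois_nonneg (by linarith) k) (hd_nonneg k))
      (fun k => ?_) (summable_pois v)
    calc pois v k * d k ≤ pois v k * 1 :=
          mul_le_mul_of_nonneg_left (hd_le_one k) (pois_nonneg (by linarith) k)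
      _ = pois v k := mul_one _
  have hfg : Summable fun x : ℕ × ℕ => (pois u x.1 * d x.1) * pois w x.2 := by
    apply summable_mul_of_summable_norm (f := fun k => pois u k * d k) (g := pois w)
    · apply hf_sum.abs.congr
      intro k; simp [Real.norm_eq_abs, abs_mul]
    · apply (summable_pois w).abs.congr
      intro k; simp [Real.norm_eq_abs]
  have htsumA : ∑' k, pois u k * d k = ∑' k, A k := by
    have h1 : ∑' k, pois u k * d k = (∑' k, pois u k * d k) * ∑' m, pois w m := by
      rw [tsum_pois w, mul_one]
    rw [h1, Summable.tsum_mul_tsum_eq_tsum_sum_antidiagonal hf_sum (summable_pois w) hfg]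
  have hAB : ∀ k, A k ≤ B k := by
    intro k
    have : B k = ∑ ij ∈ Finset.HasAntidiagonal.antidiagonal k, pois u ij.1 * pois w ij.2 * d k := by
      rw [hB]; simp only [hv, pois_conv u w k, Finset.sum_mul]
    rw [this]
    refine Finset.sum_le_sum fun ij hij => ?_
    have h1 : ij.1 ≤ k := Finset.HasAntidiagonal.antidiagonal.fst_le hij
    calc pois u ij.1 * d ij.1 * pois w ij.2
        = pois u ij.1 * pois w ij.2 * d ij.1 := by ring
      _ ≤ pois u ij.1 * pois w ij.2 * d k :=
          mul_le_mul_of_nonneg_left (hd_mono h1)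
            (mul_nonneg (pois_nonneg hu ij.1) (pois_nonneg hw0.le ij.2))
  have hanti1 : (Finset.HasAntidiagonal.antidiagonal 1 : Finset (ℕ × ℕ)) = {(0, 1), (1, 0)} := by decide
  have hA1 : A 1 < B 1 := by
    have hBexp : B 1 = (pois u 0 * pois w 1 + pois u 1 * pois w 0) * d 1 := by
      rw [hB]
      simp only [hv, pois_conv u w 1, hanti1]
      rw [Finset.sum_insert (by decide), Finset.sum_singleton]
    have hAexp : A 1 = pois u 0 * d 0 * pois w 1 + pois u 1 * d 1 * pois w 0 := by
      simp only [hA]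
      rw [hanti1, Finset.sum_insert (by decide), Finset.sum_singleton]
    rw [hAexp, hBexp]
    have hpos : 0 < pois u 0 * pois w 1 := by
      unfold pois
      simp only [pow_zero, pow_one, Nat.factorial]
      have := Real.exp_pos (-u)
      have := Real.exp_pos (-w)
      push_cast
      rw [mul_one, div_one, div_one]
      positivity
    nlinarith [hd01, hpos]
  have hA_nonneg : ∀ k, 0 ≤ A k := fun k =>
    Finset.sum_nonneg fun ij _ =>
      mul_nonneg (mul_nonneg (pois_nonneg hu ij.1) (hd_nonneg ij.1)) (pois_nonneg hw0.le ij.2)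
  calc ∑' k, pois u k * d k = ∑' k, A k := htsumA
    _ < ∑' k, B k := Summable.tsum_lt_tsum_of_nonneg hA_nonneg hAB hA1 hB_sum
    _ = ∑' k, pois v k * d k := rfl

/-- Polynomial factor of the antiderivative. -/
noncomputable def gp : ℕ → ℝ → ℝ
  | 0, _ => 1
  | (k+1), x => 2 * (k+1) * gp k x + x ^ (2 * (k+1))

lemma hasDerivAt_exp_neg_sq (x : ℝ) :
    HasDerivAt (fun y : ℝ => Real.exp (-(y ^ 2) / 2)) (Real.exp (-(x ^ 2) / 2) * (-x)) x := by
  have h1 : HasDerivAt (fun y : ℝ => -(y ^ 2) / 2) (-x) x := by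
    have := ((hasDerivAt_pow 2 x).neg).div_const 2
    simpa using this.congr_deriv (by ring)
  exact h1.exp

lemma gp_hasDerivAt (k : ℕ) (x : ℝ) :
    HasDerivAt (fun y => -(Real.exp (-(y ^ 2) / 2) * gp k y))
      (x ^ (2 * k + 1) * Real.exp (-(x ^ 2) / 2)) x := by
  induction k with
  | zero =>
      have h := (hasDerivAt_exp_neg_sq x).neg
      have heq : (fun y : ℝ => -(Real.exp (-(y ^ 2) / 2) * gp 0 y))
          = fun y : ℝ => -Real.exp (-(y ^ 2) / 2) := by
        funext y; simp [gp]
      rw [heq]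
      refine h.congr_deriv ?_; ring
  | succ k ih =>
      have heq : (fun y : ℝ => -(Real.exp (-(y ^ 2) / 2) * gp (k+1) y))
          = fun y : ℝ => (2 * (k+1) : ℝ) * -(Real.exp (-(y ^ 2) / 2) * gp k y)
              - Real.exp (-(y ^ 2) / 2) * y ^ (2 * (k + 1)) := by
        funext y; simp only [gp]; push_cast; ring
      rw [heq]
      have h2 : HasDerivAt (fun y : ℝ => Real.exp (-(y ^ 2) / 2) * y ^ (2 * (k + 1)))
          (Real.exp (-(x ^ 2) / 2) * (-x) * x ^ (2 * (k + 1))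
            + Real.exp (-(x ^ 2) / 2) * ((2 * (k + 1) : ℕ) * x ^ (2 * (k + 1) - 1))) x :=
        (hasDerivAt_exp_neg_sq x).mul (hasDerivAt_pow (2 * (k + 1)) x)
      have h3 := (ih.const_mul (2 * (k+1) : ℝ)).sub h2
      refine h3.congr_deriv ?_
      have hsub : 2 * (k + 1) - 1 = 2 * k + 1 := by omega
      rw [hsub]
      have hx : x ^ (2 * (k + 1)) = x * x ^ (2 * k + 1) := by ring
      have hx2 : x ^ (2 * (k + 1) + 1) = x * x ^ (2 * (k + 1)) := by ring
      push_cast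
      rw [hx2, hx]
      ring

lemma tendsto_exp_neg_sq_mul_pow (n : ℕ) :
    Filter.Tendsto (fun x : ℝ => Real.exp (-(x ^ 2) / 2) * x ^ n) Filter.atTop (nhds 0) := by
  have hup : Filter.Tendsto (fun x : ℝ => Real.exp (1/2 : ℝ) * (x ^ n * Real.exp (-x)))
      Filter.atTop (nhds 0) := by
    have := (tendsto_pow_mul_exp_neg_atTop_nhds_zero n).const_mul (Real.exp (1/2 : ℝ))
    simpa using this
  apply tendsto_of_tendsto_of_tendsto_of_le_of_le' tendsto_const_nhds hup
  · filter_upwards [Filter.eventually_ge_atTop (0 : ℝ)] with x hx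
    positivity
  · filter_upwards [Filter.eventually_ge_atTop (0 : ℝ)] with x hx
    have h1 : Real.exp (-(x ^ 2) / 2) ≤ Real.exp (1/2 - x) := by
      apply Real.exp_le_exp.2; nlinarith [sq_nonneg (x - 1)]
    calc Real.exp (-(x ^ 2) / 2) * x ^ n ≤ Real.exp (1/2 - x) * x ^ n := by
          apply mul_le_mul_of_nonneg_right h1 (by positivity)
      _ = Real.exp (1/2 : ℝ) * (x ^ n * Real.exp (-x)) := by
          rw [show (1/2 - x : ℝ) = 1/2 + -x by ring, Real.exp_add]; ring

lemma tendsto_gp (k : ℕ) :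
    Filter.Tendsto (fun y : ℝ => Real.exp (-(y ^ 2) / 2) * gp k y) Filter.atTop (nhds 0) := by
  induction k with
  | zero =>
      simpa [gp] using tendsto_exp_neg_sq_mul_pow 0
  | succ k ih =>
      have heq : (fun y : ℝ => Real.exp (-(y ^ 2) / 2) * gp (k+1) y)
          = fun y : ℝ => (2 * (k+1) : ℝ) * (Real.exp (-(y ^ 2) / 2) * gp k y)
              + Real.exp (-(y ^ 2) / 2) * y ^ (2 * (k + 1)) := by
        funext y; simp only [gp]; push_cast; ring
      rw [heq]
      have := (ih.const_mul (2 * (k+1) : ℝ)).add (tendsto_exp_neg_sq_mul_pow (2 * (k + 1)))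
      simpa using this

lemma integrableOn_xpow_exp {b : ℝ} (hb : 0 < b) (k : ℕ) :
    IntegrableOn (fun x : ℝ => x ^ (2 * k + 1) * Real.exp (-(x ^ 2) / 2)) (Set.Ioi b) := by
  apply integrableOn_Ioi_deriv_of_nonneg' (fun x _ => gp_hasDerivAt k x)
  · intro x hx
    have hx0 : 0 < x := lt_trans hb hx
    positivity
  · show Filter.Tendsto _ Filter.atTop (nhds (0:ℝ))
    simpa using (tendsto_gp k).neg

lemma integral_xpow_exp {b : ℝ} (hb : 0 < b) (k : ℕ) :
    ∫ x in Set.Ioi b, x ^ (2 * k + 1) * Real.exp (-(x ^ 2) / 2)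
      = Real.exp (-(b ^ 2) / 2) * gp k b := by
  have h := integral_Ioi_of_hasDerivAt_of_nonneg' (fun x _ => gp_hasDerivAt k x)
    (fun x hx => by
      have hx0 : 0 < x := lt_trans hb hx
      positivity)
    (by simpa using (tendsto_gp k).neg : Filter.Tendsto _ Filter.atTop (nhds (0:ℝ)))
  rw [h]; ring

lemma gp_eq_spart (k : ℕ) (x : ℝ) :
    gp k x = 2 ^ k * (k.factorial : ℝ) * Spart (x ^ 2 / 2) k := by
  induction k with
  | zero => simp [gp, Spart]
  | succ k ih =>
      have hfac : ((k+1).factorial : ℝ) = (k + 1 : ℝ) * (k.factorial : ℝ) := by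
        push_cast [Nat.factorial_succ]; ring
      have hS : Spart (x ^ 2 / 2) (k + 1)
          = Spart (x ^ 2 / 2) k + (x ^ 2 / 2) ^ (k+1) / ((k+1).factorial : ℝ) := by
        simp [Spart, Finset.sum_range_succ]
      have hpow : (x ^ 2 / 2) ^ (k + 1) = x ^ (2 * (k + 1)) / 2 ^ (k + 1) := by
        rw [div_pow, ← pow_mul]
      have hf : ((k+1).factorial : ℝ) ≠ 0 := Nat.cast_ne_zero.2 (Nat.factorial_ne_zero _)
      simp only [gp, ih, hS, hpow, hfac]
      have h2 : (2:ℝ) ^ (k+1) ≠ 0 := by positivity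
      field_simp
      ring

/-- Series representation of the Marcum Q-function. -/
lemma marcumQ_eq (a b : ℝ) (hb : 0 < b) :
    marcumQ a b = ∑' k, pois (a^2/2) k * (Real.exp (-(b^2/2)) * Spart (b^2/2) k) := by
  set C : ℕ → ℝ := fun k => Real.exp (-(a^2) / 2) * (a^2/4)^k / ((k.factorial : ℝ))^2 with hC
  set f : ℕ → ℝ → ℝ := fun k x => C k * (x ^ (2*k+1) * Real.exp (-(x^2) / 2)) with hf
  have hC_nonneg : ∀ k, 0 ≤ C k := by
    intro k; rw [hC]; positivity
  -- pointwise expansion of the integrand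
  have hpt : ∀ x : ℝ, x * Real.exp (-(x^2 + a^2) / 2) * besselI0 (a * x) = ∑' k, f k x := by
    intro x
    unfold besselI0
    rw [← tsum_mul_left]
    refine tsum_congr fun k => ?_
    have hexp : Real.exp (-(x^2 + a^2) / 2) = Real.exp (-(x^2) / 2) * Real.exp (-(a^2) / 2) := by
      rw [← Real.exp_add]; ring_nf
    have hp : ((a * x / 2) : ℝ) ^ (2 * k) = (a^2/4)^k * x^(2*k) := by
      rw [pow_mul, show ((a * x / 2)^2 : ℝ) = (a^2/4) * x^2 by ring, mul_pow, ← pow_mul]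
    have hxp : x ^ (2*k+1) = x * x^(2*k) := by ring
    simp only [hf, hC]
    rw [hexp, hp, hxp]
    ring
  -- value of each term integral
  have hterm : ∀ k, (∫ x in Set.Ioi b, f k x)
      = pois (a^2/2) k * (Real.exp (-(b^2/2)) * Spart (b^2/2) k) := by
    intro k
    rw [hf]
    simp only
    rw [MeasureTheory.integral_const_mul, integral_xpow_exp hb k, gp_eq_spart k b]
    have hk : ((k.factorial : ℝ)) ≠ 0 := Nat.cast_ne_zero.2 (Nat.factorial_ne_zero _)
    have h24 : ((a^2/4) * 2 : ℝ)^k = (a^2/2)^k := by rw [show (a^2/4*2 : ℝ) = a^2/2 by ring]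
    rw [hC]
    unfold pois
    rw [show (-(b^2) / 2 : ℝ) = -(b^2/2) by ring, show (-(a^2) / 2 : ℝ) = -(a^2/2) by ring]
    rw [← h24, mul_pow]
    field_simp
  -- integrability of each term
  have hint : ∀ k, IntegrableOn (f k) (Set.Ioi b) := by
    intro k
    exact (integrableOn_xpow_exp hb k).const_mul (C k)
  -- nonnegativity a.e.
  have hnn : ∀ k, 0 ≤ᵐ[volume.restrict (Set.Ioi b)] f k := by
    intro k
    filter_upwards [ae_restrict_mem measurableSet_Ioi] with x hx
    have hx0 : 0 < x := lt_trans hb hx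
    rw [hf]
    have := hC_nonneg k
    positivity
  -- summability of the term values
  have hsummable : Summable (fun k => pois (a^2/2) k * (Real.exp (-(b^2/2)) * Spart (b^2/2) k)) := by
    have hu : (0:ℝ) ≤ a^2/2 := by positivity
    have hl : (0:ℝ) ≤ b^2/2 := by positivity
    apply Summable.of_nonneg_of_le
      (fun k => mul_nonneg (pois_nonneg hu k)
        (mul_nonneg (Real.exp_pos _).le (Spart_nonneg hl k)))
      (fun k => ?_) (summable_pois (a^2/2))
    have hd1 : Real.exp (-(b^2/2)) * Spart (b^2/2) k ≤ 1 := by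
      have := mul_le_mul_of_nonneg_left (Spart_le_exp hl k) (Real.exp_pos (-(b^2/2))).le
      simpa [← Real.exp_add] using this
    calc pois (a^2/2) k * (Real.exp (-(b^2/2)) * Spart (b^2/2) k) ≤ pois (a^2/2) k * 1 :=
          mul_le_mul_of_nonneg_left hd1 (pois_nonneg hu k)
      _ = pois (a^2/2) k := mul_one _
  -- interchange of sum and integral
  have hmeas : ∀ k, AEStronglyMeasurable (f k) (volume.restrict (Set.Ioi b)) := by
    intro k
    apply Continuous.aestronglyMeasurable
    rw [hf]
    continuity
  have hlint : ∑' k, ∫⁻ x, ‖f k x‖₊ ∂(volume.restrict (Set.Ioi b)) ≠ ⊤ := by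
    have heach : ∀ k, ∫⁻ x, ‖f k x‖₊ ∂(volume.restrict (Set.Ioi b))
        = ENNReal.ofReal (pois (a^2/2) k * (Real.exp (-(b^2/2)) * Spart (b^2/2) k)) := by
      intro k
      rw [← hterm k]
      have h1 : ∫⁻ x, ‖f k x‖₊ ∂(volume.restrict (Set.Ioi b))
          = ∫⁻ x, ENNReal.ofReal (f k x) ∂(volume.restrict (Set.Ioi b)) := by
        apply lintegral_congr_ae
        filter_upwards [hnn k] with x hx
        exact Real.enorm_eq_ofReal hx
      rw [h1, ← ofReal_integral_eq_lintegral_ofReal (hint k) (hnn k)]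
    simp only [heach]
    rw [← ENNReal.ofReal_tsum_of_nonneg
      (fun k => mul_nonneg (pois_nonneg (by positivity) k)
        (mul_nonneg (Real.exp_pos _).le (Spart_nonneg (by positivity) k))) hsummable]
    exact ENNReal.ofReal_ne_top
  have := MeasureTheory.integral_tsum hmeas hlint
  calc marcumQ a b = ∫ x in Set.Ioi b, ∑' k, f k x := by
        unfold marcumQ
        exact integral_congr_ae (Filter.Eventually.of_forall hpt)
    _ = ∑' k, ∫ x in Set.Ioi b, f k x := this
    _ = ∑' k, pois (a^2/2) k * (Real.exp (-(b^2/2)) * Spart (b^2/2) k) := by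
        exact tsum_congr hterm

/-- The Marcum Q-function `Q₁(a,b)` is strictly increasing in `a ≥ 0` for fixed `b > 0`. -/
theorem marcumQ_strictMonoOn (b : ℝ) (hb : 0 < b) :
    StrictMonoOn (fun a => marcumQ a b) (Set.Ici (0:ℝ)) := by
  intro a1 h1 a2 h2 h12
  simp only [Set.mem_Ici] at h1 h2
  have hl : (0:ℝ) < b^2/2 := by positivity
  have hu1 : (0:ℝ) ≤ a1^2/2 := by positivity
  have huv : a1^2/2 < a2^2/2 := by nlinarith
  simp only
  rw [marcumQ_eq a1 b hb, marcumQ_eq a2 b hb]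
  exact key_mono hl hu1 huv
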